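/- Equidistance signs for C (Corollary to Theorem 4): Let c(x) = h_1(x)···h_k(x) (k > 1) be a product of k distinct monic irreducible divisors of x^n − 1 over GF(q), where h_i has degree m_i > 1 and order n_i ≠ q^{m_i} − 1 for each i, and let n_c = ord(c) = lcm(n_1, …, n_k). Let C be the set of all elements of A_n with minimal polynomial c, let R_c be the number of proportionality classes of C and s_c = R_c·(q − 1)/n_c the number of cycles of C, and set d_c = gcd(q − 1, n_c), r_c = n_c/d_c, b_c = (q − 1)/d_c. If at least one of the conditions s_c = b_c, r_c = R_c, or gcd(s_c, R_c) = 1 holds, then all vectors of C have the same Hamming weight. -/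

import Mathlib

open Polynomial

namespace CyclicCode

open scoped Classical

variable (F : Type) [Field F] [Fintype F]

/-- The ambient algebra `A_n = GF(q)[x]/(x^n - 1)`. -/
abbrev An (n : ℕ) := AdjoinRoot (X ^ n - 1 : F[X])

/-- The image of `x` in `A_n`. -/
noncomputable def xbar (n : ℕ) : An F n := AdjoinRoot.root _

variable {F}

/-- The proportionality class `P_z = {α • z : α ∈ GF(q)^*}` of `z`. -/
def propClass {n : ℕ} (z : An F n) : Set (An F n) :=
  {w | ∃ α : F, α ≠ 0 ∧ w = α • z}

/-- The cycle `{x^j • z : j}` of `z`. -/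
noncomputable def cyc {n : ℕ} (z : An F n) : Set (An F n) :=
  {w | ∃ j : ℕ, w = xbar F n ^ j * z}

/-- The period of `z`: the least positive `e` with `x^e * z = z`. -/
noncomputable def period {n : ℕ} (z : An F n) : ℕ :=
  sInf {e : ℕ | 0 < e ∧ xbar F n ^ e * z = z}

/-- The order of a polynomial `f`: the least positive `e` with `f ∣ X^e - 1`. -/
noncomputable def polyOrder {F : Type} [Field F] (f : F[X]) : ℕ :=
  sInf {e : ℕ | 0 < e ∧ f ∣ X ^ e - 1}

/-- The representative of degree `< n` of an element of `A_n`. -/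
noncomputable def rep {n : ℕ} (z : An F n) : F[X] :=
  if h : (X ^ n - 1 : F[X]).Monic then AdjoinRoot.modByMonicHom h z else 0

/-- The Hamming weight of an element of `A_n`. -/
noncomputable def wt {n : ℕ} (z : An F n) : ℕ := (rep z).support.card

/-- `c` is the minimal polynomial of `z ∈ A_n`: a polynomial annihilates `z`
iff it is a multiple of `c`. -/
def HasMinPoly {n : ℕ} (z : An F n) (c : F[X]) : Prop :=
  ∀ f : F[X], AdjoinRoot.mk (X ^ n - 1 : F[X]) f * z = 0 ↔ c ∣ f

/-- The cyclic code of length `n` with parity-check polynomial `h`: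
the ideal of `A_n` generated by `(X^n - 1)/h`. -/
noncomputable def code (F : Type) [Field F] (n : ℕ) (h : F[X]) : Ideal (An F n) :=
  Ideal.span {AdjoinRoot.mk (X ^ n - 1 : F[X]) ((X ^ n - 1) / h)}

/-- The proportionality classes meeting a set `C`. -/
def classesOf {n : ℕ} (C : Set (An F n)) : Set (Set (An F n)) :=
  {P | ∃ z ∈ C, P = propClass z}

/-- The cycles meeting a set `C`. -/
noncomputable def cyclesOf {n : ℕ} (C : Set (An F n)) : Set (Set (An F n)) :=
  {S | ∃ z ∈ C, S = cyc z}

/-- The minimum Hamming distance of a linear code `J ⊆ A_n`. -/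
noncomputable def minDist {n : ℕ} (J : Ideal (An F n)) : ℕ :=
  sInf {k : ℕ | ∃ z ∈ J, z ≠ 0 ∧ wt z = k}

/-- The multiplicative order of `q` modulo `n`. -/
noncomputable def multOrder (q n : ℕ) : ℕ :=
  sInf {e : ℕ | 0 < e ∧ q ^ e ≡ 1 [MOD n]}


section Aux
set_option linter.unusedSectionVars false
set_option linter.unusedVariables false
variable {n : ℕ}

lemma monic_Xn (hn : 0 < n) : (X ^ n - 1 : F[X]).Monic := by
  simpa using monic_X_pow_sub_C (1 : F) hn.ne'

lemma degree_Xn (hn : 0 < n) : (X ^ n - 1 : F[X]).degree = n := by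
  simpa using degree_X_pow_sub_C hn (1 : F)

lemma xbar_pow_n (hn : 0 < n) : (xbar F n) ^ n = 1 := by
  have h := AdjoinRoot.mk_self (f := (X ^ n - 1 : F[X]))
  have : (AdjoinRoot.mk (X ^ n - 1 : F[X])) (X ^ n) - 1 = 0 := by
    rw [← h]; push_cast [map_sub, map_one]; ring
  have h2 : (xbar F n) ^ n - 1 = 0 := by
    simpa [xbar, map_pow, AdjoinRoot.mk_X] using this
  linear_combination h2

lemma isUnit_xbar (hn : 0 < n) : IsUnit (xbar F n) := by
  refine IsUnit.of_mul_eq_one ((xbar F n) ^ (n - 1)) ?_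
  rw [← pow_succ', Nat.sub_add_cancel hn, xbar_pow_n hn]

lemma hmp_dvd_Xn {z : An F n} {c : F[X]} (hz : HasMinPoly z c) : c ∣ X ^ n - 1 :=
  (hz (X ^ n - 1)).mp (by rw [AdjoinRoot.mk_self, zero_mul])

lemma hmp_smul {z : An F n} {c : F[X]} (hz : HasMinPoly z c) {α : F} (hα : α ≠ 0) :
    HasMinPoly (α • z) c := by
  intro f
  rw [mul_smul_comm, smul_eq_zero, hz]
  simp [hα]

lemma hmp_unit_mul {z : An F n} {c : F[X]} (hz : HasMinPoly z c) {u : An F n}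
    (hu : IsUnit u) : HasMinPoly (u * z) c := by
  intro f
  rw [mul_left_comm, ← hz f]
  constructor
  · intro h
    have := congrArg (fun t => ((hu.unit⁻¹ : (An F n)ˣ) : An F n) * t) h
    simpa [← mul_assoc, IsUnit.val_inv_mul hu] using this
  · intro h; rw [h, mul_zero]

lemma hmp_pow_iff {z : An F n} {c : F[X]} (hz : HasMinPoly z c) (e : ℕ) :
    xbar F n ^ e * z = z ↔ c ∣ X ^ e - 1 := by
  have hmk : AdjoinRoot.mk (X ^ n - 1 : F[X]) (X ^ e - 1) = xbar F n ^ e - 1 := by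
    push_cast [map_sub, map_pow, map_one, AdjoinRoot.mk_X]; rfl
  rw [← hz (X ^ e - 1), hmk, sub_mul, one_mul, sub_eq_zero]

lemma hmp_ne_zero {z : An F n} {c : F[X]} (hz : HasMinPoly z c) (hcu : ¬ IsUnit c) :
    z ≠ 0 := by
  intro h
  exact hcu (isUnit_of_dvd_one ((hz 1).mp (by rw [h, mul_zero])))

lemma polyOrder_spec {c : F[X]} (hn : 0 < n) (hd : c ∣ X ^ n - 1) :
    0 < polyOrder c ∧ c ∣ X ^ (polyOrder c) - 1 :=
  Nat.sInf_mem (⟨n, hn, hd⟩ : Set.Nonempty {e : ℕ | 0 < e ∧ c ∣ X ^ e - 1})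

lemma polyOrder_dvd {c : F[X]} (hn : 0 < n) (hd : c ∣ X ^ n - 1) {e : ℕ}
    (he : c ∣ X ^ e - 1) : polyOrder c ∣ e := by
  obtain ⟨hpos, hdc⟩ := polyOrder_spec hn hd
  set nc := polyOrder c with hnc
  have hmod : c ∣ X ^ (e % nc) - 1 := by
    have h1 : c ∣ (X : F[X]) ^ (nc * (e / nc)) - 1 := by
      refine hdc.trans ?_
      have := sub_dvd_pow_sub_pow ((X : F[X]) ^ nc) 1 (e / nc)
      simpa [← pow_mul] using this
    have hXe : (X : F[X]) ^ e = X ^ (e % nc) * X ^ (nc * (e / nc)) := by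
      rw [← pow_add, Nat.add_comm, Nat.div_add_mod]
    have key : (X : F[X]) ^ (e % nc) - 1
        = (X ^ e - 1) - X ^ (e % nc) * (X ^ (nc * (e / nc)) - 1) := by
      rw [hXe]; ring
    rw [key]
    exact dvd_sub he (Dvd.dvd.mul_left h1 _)
  rcases Nat.eq_zero_or_pos (e % nc) with h0 | hpos'
  · exact Nat.dvd_of_mod_eq_zero h0
  · exfalso
    have hle : nc ≤ e % nc := Nat.sInf_le ⟨hpos', hmod⟩
    exact absurd (Nat.mod_lt e hpos) (not_lt.mpr hle)

lemma rep_mk (hn : 0 < n) (p : F[X]) :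
    rep (AdjoinRoot.mk (X ^ n - 1 : F[X]) p) = p %ₘ (X ^ n - 1) := by
  rw [rep, dif_pos (monic_Xn hn), AdjoinRoot.modByMonicHom_mk]

lemma mk_rep (hn : 0 < n) (z : An F n) :
    AdjoinRoot.mk (X ^ n - 1 : F[X]) (rep z) = z := by
  obtain ⟨p, rfl⟩ := AdjoinRoot.mk_surjective z
  rw [rep_mk hn, AdjoinRoot.mk_eq_mk]
  refine ⟨-(p /ₘ (X ^ n - 1)), ?_⟩
  have := modByMonic_add_div p (X ^ n - 1 : F[X])
  linear_combination this

lemma degree_rep_lt (hn : 0 < n) (z : An F n) : (rep z).degree < n := by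
  obtain ⟨p, rfl⟩ := AdjoinRoot.mk_surjective z
  rw [rep_mk hn]
  have := degree_modByMonic_lt p (monic_Xn (F := F) hn)
  rwa [degree_Xn hn] at this

lemma wt_smul {α : F} (hα : α ≠ 0) (z : An F n) : wt (α • z) = wt z := by
  rcases Nat.eq_zero_or_pos n with rfl | hn
  · have : ¬ (X ^ 0 - 1 : F[X]).Monic := by simp [Monic]
    simp [wt, rep, dif_neg this]
  have hrep : rep (α • z) = α • rep z := by
    rw [rep, rep, dif_pos (monic_Xn hn), dif_pos (monic_Xn hn), map_smul]
  rw [wt, wt, hrep]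
  congr 1
  refine subset_antisymm (support_smul _ _) ?_
  have : rep z = α⁻¹ • (α • rep z) := by rw [smul_smul, inv_mul_cancel₀ hα, one_smul]
  nth_rewrite 1 [this]
  exact support_smul _ _

lemma wt_xbar_mul (hn : 0 < n) (z : An F n) : wt (xbar F n * z) = wt z := by
  set p := rep z with hp
  have hdeg : p.degree < n := degree_rep_lt hn z
  set a := p.coeff (n - 1) with ha
  set q' : F[X] := (p.erase (n - 1)) * X + C a with hq'
  have hid : (X : F[X]) * p = q' + C a * (X ^ n - 1) := by
    have hsplit : (monomial (n-1)) a + p.erase (n-1) = p := monomial_add_erase p (n-1)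
    have hmono : (monomial (n-1)) a = C a * X ^ (n-1) := by
      rw [C_mul_X_pow_eq_monomial]
    have hXn : (X : F[X]) ^ n = X ^ (n-1) * X := by
      rw [← pow_succ, Nat.sub_add_cancel hn]
    rw [← hsplit, hmono, hq', hXn]; ring
  have hq0 : q'.coeff 0 = a := by
    simp [hq', coeff_add, coeff_mul_X_zero, coeff_C]
  have hqsucc : ∀ k : ℕ, q'.coeff (k+1) = if k = n-1 then 0 else p.coeff k := by
    intro k
    simp [hq', coeff_add, coeff_mul_X, coeff_C, coeff_erase]
  have hdq : q'.degree < (n : ℕ) := by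
    rw [degree_lt_iff_coeff_zero]
    intro m hm
    have hm1 : 1 ≤ m := le_trans (by exact_mod_cast hn) hm
    obtain ⟨k, rfl⟩ := Nat.exists_eq_add_of_le hm1
    rw [Nat.add_comm] at *
    rw [hqsucc k]
    by_cases hk : k = n - 1
    · simp [hk]
    · rw [if_neg hk]
      apply coeff_eq_zero_of_degree_lt
      refine lt_of_lt_of_le hdeg ?_
      have : n ≤ k := by
        have : n ≤ k + 1 := by exact_mod_cast hm
        omega
      exact_mod_cast Nat.cast_le.mpr this
  have hrepx : rep (xbar F n * z) = q' := by
    have hz : z = AdjoinRoot.mk (X ^ n - 1 : F[X]) p := (mk_rep hn z).symm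
    have : xbar F n * z = AdjoinRoot.mk (X ^ n - 1 : F[X]) (X * p) := by
      rw [hz, map_mul, AdjoinRoot.mk_X]; try rfl
    rw [this, rep_mk hn, hid, add_modByMonic,
      (modByMonic_eq_zero_iff_dvd (monic_Xn hn)).mpr (Dvd.intro_left _ rfl), add_zero,
      (modByMonic_eq_self_iff (monic_Xn hn)).mpr (by rwa [degree_Xn hn])]
  have hsupp : ∀ i ∈ p.support, i < n := by
    intro i hi
    have : (i : WithBot ℕ) ≤ p.degree := le_degree_of_ne_zero (mem_support_iff.mp hi)
    exact_mod_cast lt_of_le_of_lt this hdeg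
  rw [wt, wt, hrepx, ← hp]
  refine (Finset.card_bij (fun i _ => if i = n-1 then 0 else i+1) ?_ ?_ ?_).symm
  · intro i hi
    by_cases h : i = n-1
    · subst h
      rw [if_pos rfl, mem_support_iff, hq0]
      exact mem_support_iff.mp hi
    · rw [if_neg h, mem_support_iff, hqsucc i, if_neg h]
      exact mem_support_iff.mp hi
  · intro i hi j hj hij
    by_cases h1 : i = n-1 <;> by_cases h2 : j = n-1 <;>
      simp [h1, h2] at hij ⊢ <;> omega
  · intro j hj
    rcases Nat.eq_zero_or_pos j with rfl | hjpos
    · refine ⟨n-1, ?_, by simp⟩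
      rw [mem_support_iff, ← ha]
      rw [mem_support_iff, hq0] at hj
      exact hj
    · obtain ⟨k, rfl⟩ := Nat.exists_eq_add_of_le hjpos
      rw [Nat.add_comm 1 k] at *
      rw [mem_support_iff, hqsucc k] at hj
      by_cases hk : k = n-1
      · simp [hk] at hj
      · refine ⟨k, ?_, by simp [hk]⟩
        rw [mem_support_iff]
        rw [if_neg hk] at hj
        exact hj

lemma wt_xpow_mul (hn : 0 < n) (j : ℕ) (z : An F n) : wt (xbar F n ^ j * z) = wt z := by
  induction j with
  | zero => simp
  | succ k ih => rw [pow_succ, mul_comm (xbar F n ^ k), mul_assoc, wt_xbar_mul hn, ih]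

lemma finite_An [Fintype F] (hn : 0 < n) : Finite (An F n) := by
  have h0 : (X ^ n - 1 : F[X]) ≠ 0 := (monic_Xn hn).ne_zero
  exact Finite.of_equiv _ (AdjoinRoot.powerBasis h0).basis.repr.toEquiv.symm

lemma propClass_smul {v : An F n} {α : F} (hα : α ≠ 0) :
    propClass (α • v) = propClass v := by
  ext u
  constructor
  · rintro ⟨β, hβ, rfl⟩
    exact ⟨β * α, mul_ne_zero hβ hα, by rw [smul_smul]⟩
  · rintro ⟨β, hβ, rfl⟩
    exact ⟨β * α⁻¹, mul_ne_zero hβ (inv_ne_zero hα), by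
      rw [smul_smul, mul_assoc, inv_mul_cancel₀ hα, mul_one]⟩

open MulAction in
lemma card_of_free (G α : Type) [Group G] [MulAction G α] [Finite G] [Finite α]
    (h : ∀ (g : G) (a : α), g • a = a → g = 1) :
    Nat.card α = Nat.card (orbitRel.Quotient G α) * Nat.card G := by
  classical
  have hstab : ∀ a : α, stabilizer G a = ⊥ := by
    intro a
    ext g
    simp only [mem_stabilizer_iff, Subgroup.mem_bot]
    exact ⟨fun hg => h g a hg, fun hg => by rw [hg, one_smul]⟩
  have horb : ∀ a : α, Nat.card (orbit G a) = Nat.card G := by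
    intro a
    rw [Nat.card_congr (orbitEquivQuotientStabilizer G a), hstab a,
      Nat.card_congr (QuotientGroup.quotientBot (G := G)).toEquiv]
  have e := selfEquivSigmaOrbits G α
  haveI : Fintype α := Fintype.ofFinite _
  haveI : Fintype (orbitRel.Quotient G α) := Fintype.ofFinite _
  haveI : ∀ ω : orbitRel.Quotient G α, Fintype (orbit G (Quotient.out ω)) :=
    fun ω => Fintype.ofFinite _
  rw [Nat.card_congr e, Nat.card_eq_fintype_card, Fintype.card_sigma,
    Nat.card_eq_fintype_card (α := orbitRel.Quotient G α)]
  have : ∀ ω : orbitRel.Quotient G α,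
      Fintype.card (orbit G (Quotient.out ω)) = Nat.card G := by
    intro ω; rw [← Nat.card_eq_fintype_card]; exact horb _
  rw [Finset.sum_congr rfl (fun ω _ => this ω)]
  simp [Finset.sum_const, mul_comm]

end Aux

set_option maxHeartbeats 1000000 in
/-- Equidistance signs, Corollary to Theorem 4: let `c` be a
product of `k > 1` distinct monic irreducible divisors of `x^n - 1`, each of
degree `> 1` and of nonprimitive order, `n_c = ord(c)`, `C` the set of all
elements of `A_n` with minimal polynomial `c`, `R_c` the number of
proportionality classes of `C`, `s_c = R_c(q - 1)/n_c`, `d_c = gcd(q - 1, n_c)`,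
`r_c = n_c/d_c`, `b_c = (q - 1)/d_c`. If `s_c = b_c` or `r_c = R_c` or
`gcd(s_c, R_c) = 1`, then all vectors of `C` have the same Hamming weight. -/
theorem stmt16 {F : Type} [Field F] [Fintype F] (q n k : ℕ)
    (hcard : Fintype.card F = q) (hq : 2 < q) (hn : 0 < n) (hco : Nat.Coprime n q)
    (S : Finset F[X]) (hk : 1 < k) (hcardS : S.card = k)
    (hS : ∀ p ∈ S, p.Monic ∧ Irreducible p ∧ p ∣ (X ^ n - 1 : F[X]) ∧
      1 < p.natDegree ∧ polyOrder p ≠ q ^ p.natDegree - 1)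
    (c : F[X]) (hc : c = S.prod id)
    (nc Rc sc dc rc bc : ℕ) (hnc : nc = polyOrder c)
    (hRc : Rc = Set.ncard (classesOf {z : An F n | HasMinPoly z c}))
    (hsc : sc = Rc * (q - 1) / nc)
    (hdc : dc = Nat.gcd (q - 1) nc) (hrc : rc = nc / dc) (hbc : bc = (q - 1) / dc)
    (hcond : sc = bc ∨ rc = Rc ∨ Nat.gcd sc Rc = 1) :
    ∀ z : An F n, HasMinPoly z c → ∀ w : An F n, HasMinPoly w c → wt z = wt w := by
  intro z hz w hw
  have hq1 : 0 < q - 1 := by omega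
  haveI : Finite (An F n) := finite_An hn
  have hcu : ¬ IsUnit c := by
    obtain ⟨p, hpS⟩ : S.Nonempty := Finset.card_pos.mp (by omega)
    intro hunit
    have hpdvd : p ∣ c := by
      rw [hc]
      simpa using Finset.dvd_prod_of_mem id hpS
    exact (hS p hpS).2.1.not_isUnit (isUnit_of_dvd_unit hpdvd hunit)
  have hzne : z ≠ 0 := hmp_ne_zero hz hcu
  have hwne : w ≠ 0 := hmp_ne_zero hw hcu
  have hcd : c ∣ X ^ n - 1 := hmp_dvd_Xn hz
  obtain ⟨hncpos0, hncd0⟩ := polyOrder_spec (F := F) hn hcd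
  rw [← hnc] at hncpos0 hncd0
  haveI : NeZero nc := ⟨hncpos0.ne'⟩
  set C : Set (An F n) := {v : An F n | HasMinPoly v c} with hCdef
  haveI : Finite ↥C := Subtype.finite
  haveI : Nonempty ↥C := ⟨⟨z, hz⟩⟩
  have hxu : ∀ j : ℕ, IsUnit (xbar F n ^ j) := fun j => (isUnit_xbar hn).pow j
  have hCx : ∀ (v : An F n), v ∈ C → ∀ (j : ℕ), xbar F n ^ j * v ∈ C :=
    fun v hv j => hmp_unit_mul hv (hxu j)
  have hCs : ∀ (v : An F n), v ∈ C → ∀ (α : Fˣ), (α : F) • v ∈ C :=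
    fun v hv α => hmp_smul hv α.ne_zero
  have hxnc : ∀ (v : An F n), v ∈ C → xbar F n ^ nc * v = v :=
    fun v hv => (hmp_pow_iff hv nc).mpr hncd0
  have hmul0 : ∀ (t : ℕ) (v : An F n), v ∈ C → xbar F n ^ (nc * t) * v = v := by
    intro t
    induction t with
    | zero => intro v _; simp
    | succ s ih =>
      intro v hv
      have h1 : xbar F n ^ (nc * (s + 1)) * v
          = xbar F n ^ (nc * s) * (xbar F n ^ nc * v) := by
        rw [Nat.mul_succ, pow_add, mul_assoc]
      rw [h1, hxnc v hv, ih v hv]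
  have hmodp : ∀ (a : ℕ) (v : An F n), v ∈ C →
      xbar F n ^ (a % nc) * v = xbar F n ^ a * v := by
    intro a v hv
    conv_rhs => rw [← Nat.div_add_mod a nc, pow_add, mul_assoc]
    rw [hmul0 (a / nc) _ (hCx v hv (a % nc))]
  -- the big group action
  letI smulG : SMul (Multiplicative (ZMod nc) × Fˣ) ↥C :=
    ⟨fun g v => ⟨(g.2 : F) • (xbar F n ^ ((Multiplicative.toAdd g.1).val) * v.1),
      hCs _ (hCx _ v.2 _) g.2⟩⟩
  have hsmul : ∀ (g : Multiplicative (ZMod nc) × Fˣ) (v : ↥C),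
      (g • v).1 = (g.2 : F) • (xbar F n ^ ((Multiplicative.toAdd g.1).val) * v.1) :=
    fun _ _ => rfl
  letI actG : MulAction (Multiplicative (ZMod nc) × Fˣ) ↥C :=
    { one_smul := by
        intro v
        apply Subtype.ext
        rw [hsmul]
        show ((1 : Fˣ) : F) • (xbar F n ^ ((Multiplicative.toAdd
          (1 : Multiplicative (ZMod nc))).val) * v.1) = v.1
        simp
      mul_smul := by
        intro g h v
        apply Subtype.ext
        rw [hsmul, hsmul, hsmul]
        have e1 : (Multiplicative.toAdd (g * h).1).val
            = ((Multiplicative.toAdd g.1).val + (Multiplicative.toAdd h.1).val) % nc := by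
          show (Multiplicative.toAdd (g.1 * h.1)).val = _
          rw [toAdd_mul, ZMod.val_add]
        rw [e1, hmodp _ _ v.2]
        show ((g.2 * h.2 : Fˣ) : F) • _ = _
        rw [Units.val_mul, pow_add, mul_assoc, mul_smul_comm, smul_smul]
    }
  by_cases horb : (⟨w, hw⟩ : ↥C) ∈ MulAction.orbit (Multiplicative (ZMod nc) × Fˣ) ⟨z, hz⟩
  · obtain ⟨g, hg⟩ := horb
    have hwz : w = (g.2 : F) • (xbar F n ^ ((Multiplicative.toAdd g.1).val) * z) := by
      have h1 := congrArg Subtype.val hg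
      rw [hsmul] at h1
      exact h1.symm
    rw [hwz, wt_smul g.2.ne_zero, wt_xpow_mul hn]
  · exfalso
    -- stabilizer is independent of the base point
    have hstab_iff : ∀ (v : An F n) (hv : HasMinPoly v c)
        (g : Multiplicative (ZMod nc) × Fˣ),
        g • (⟨v, hv⟩ : ↥C) = ⟨v, hv⟩ ↔
          c ∣ (Polynomial.C ((g.2 : F)) * X ^ ((Multiplicative.toAdd g.1).val) - 1) := by
      intro v hv g
      set t := (Multiplicative.toAdd g.1).val with ht
      have hmk : AdjoinRoot.mk (X ^ n - 1 : F[X])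
          (Polynomial.C ((g.2 : F)) * X ^ t - 1) * v
          = (g.2 : F) • (xbar F n ^ t * v) - v := by
        rw [map_sub, map_one, map_mul, map_pow, AdjoinRoot.mk_X, AdjoinRoot.mk_C,
          sub_mul, one_mul]
        congr 1
        rw [Algebra.smul_def, AdjoinRoot.algebraMap_eq]
        show AdjoinRoot.of _ _ * AdjoinRoot.root _ ^ t * v = _
        rw [mul_assoc]
        rfl
      constructor
      · intro h
        have h2 := congrArg Subtype.val h
        rw [hsmul] at h2
        exact (hv _).mp (by rw [hmk]; rw [← ht] at h2; rw [h2, sub_self])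
      · intro h
        apply Subtype.ext
        rw [hsmul, ← ht]
        have h3 := (hv _).mpr h
        rw [hmk] at h3
        exact sub_eq_zero.mp h3
    have hstabeq : MulAction.stabilizer (Multiplicative (ZMod nc) × Fˣ) (⟨z, hz⟩ : ↥C)
        = MulAction.stabilizer (Multiplicative (ZMod nc) × Fˣ) (⟨w, hw⟩ : ↥C) := by
      ext g
      simp only [MulAction.mem_stabilizer_iff]
      rw [hstab_iff z hz g, hstab_iff w hw g]
    set e := Nat.card (MulAction.stabilizer (Multiplicative (ZMod nc) × Fˣ)
      (⟨z, hz⟩ : ↥C)) with he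
    have hcardMZ : Nat.card (Multiplicative (ZMod nc)) = nc := by
      rw [Nat.card_congr (Multiplicative.toAdd : Multiplicative (ZMod nc) ≃ ZMod nc),
        Nat.card_zmod]
    have hcardU : Nat.card Fˣ = q - 1 := by
      rw [Nat.card_eq_fintype_card, Fintype.card_units, hcard]
    have hcardG : Nat.card (Multiplicative (ZMod nc) × Fˣ) = nc * (q - 1) := by
      rw [Nat.card_prod, hcardMZ, hcardU]
    have horbz : Nat.card (MulAction.orbit (Multiplicative (ZMod nc) × Fˣ)
        (⟨z, hz⟩ : ↥C)) * e = nc * (q - 1) := by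
      rw [he, Nat.card_congr (MulAction.orbitEquivQuotientStabilizer _ _),
        ← Subgroup.card_eq_card_quotient_mul_card_subgroup, hcardG]
    have horbw : Nat.card (MulAction.orbit (Multiplicative (ZMod nc) × Fˣ)
        (⟨w, hw⟩ : ↥C)) * e = nc * (q - 1) := by
      rw [he, hstabeq, Nat.card_congr (MulAction.orbitEquivQuotientStabilizer _ _),
        ← Subgroup.card_eq_card_quotient_mul_card_subgroup, hcardG]
    -- e divides nc
    have hednc : e ∣ nc := by
      set φ := (MonoidHom.fst (Multiplicative (ZMod nc)) Fˣ).comp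
        (MulAction.stabilizer (Multiplicative (ZMod nc) × Fˣ) (⟨z, hz⟩ : ↥C)).subtype
        with hφ
      have hinj : Function.Injective φ := by
        intro g g' hgg
        have h1 := congrArg Subtype.val (MulAction.mem_stabilizer_iff.mp g.2)
        have h2 := congrArg Subtype.val (MulAction.mem_stabilizer_iff.mp g'.2)
        rw [hsmul] at h1 h2
        have hfst : (g : Multiplicative (ZMod nc) × Fˣ).1
            = (g' : Multiplicative (ZMod nc) × Fˣ).1 := hgg
        rw [hfst] at h1
        have hu : xbar F n ^ ((Multiplicative.toAdd
            ((g' : Multiplicative (ZMod nc) × Fˣ).1)).val) * z ≠ 0 := by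
          intro h0
          exact hzne (((hxu _).mul_right_eq_zero).mp h0)
        have hsub : (((g : Multiplicative (ZMod nc) × Fˣ).2 : F)
            - ((g' : Multiplicative (ZMod nc) × Fˣ).2 : F)) •
            (xbar F n ^ ((Multiplicative.toAdd
              ((g' : Multiplicative (ZMod nc) × Fˣ).1)).val) * z) = 0 := by
          rw [sub_smul, h1, h2, sub_self]
        have hαα := sub_eq_zero.mp ((smul_eq_zero.mp hsub).resolve_right hu)
        exact Subtype.ext (Prod.ext hfst (Units.ext hαα))
      have he1 : e = Nat.card φ.range :=
        Nat.card_congr (MonoidHom.ofInjective hinj).toEquiv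
      have hdvd2 := Subgroup.card_subgroup_dvd_card φ.range
      rw [hcardMZ] at hdvd2
      rw [he1]
      exact hdvd2
    -- e divides q - 1
    have hedq : e ∣ q - 1 := by
      set ψ := (MonoidHom.snd (Multiplicative (ZMod nc)) Fˣ).comp
        (MulAction.stabilizer (Multiplicative (ZMod nc) × Fˣ) (⟨z, hz⟩ : ↥C)).subtype
        with hψ
      have hinj : Function.Injective ψ := by
        intro g g' hgg
        have h1 := congrArg Subtype.val (MulAction.mem_stabilizer_iff.mp g.2)
        have h2 := congrArg Subtype.val (MulAction.mem_stabilizer_iff.mp g'.2)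
        rw [hsmul] at h1 h2
        have hsnd : (g : Multiplicative (ZMod nc) × Fˣ).2
            = (g' : Multiplicative (ZMod nc) × Fˣ).2 := hgg
        rw [hsnd] at h1
        set t := (Multiplicative.toAdd ((g : Multiplicative (ZMod nc) × Fˣ).1)).val with htd
        set t' := (Multiplicative.toAdd ((g' : Multiplicative (ZMod nc) × Fˣ).1)).val with htd'
        have hxt : xbar F n ^ t * z = xbar F n ^ t' * z := by
          have := h1.trans h2.symm
          exact smul_right_injective _ (Units.ne_zero _) this
        have ht : t < nc := ZMod.val_lt _
        have ht' : t' < nc := ZMod.val_lt _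
        have key : xbar F n ^ ((nc - t') + t) * z = z := by
          rw [pow_add, mul_assoc, hxt, ← mul_assoc, ← pow_add,
            Nat.sub_add_cancel (le_of_lt ht'), hxnc z hz]
        have hdvd := polyOrder_dvd hn hcd ((hmp_pow_iff hz _).mp key)
        rw [← hnc] at hdvd
        have htt : t = t' := by
          obtain ⟨m, hm⟩ := hdvd
          have hm2 : m < 2 := by
            by_contra hge
            push_neg at hge
            have : nc * 2 ≤ nc * m := Nat.mul_le_mul_left nc hge
            omega
          interval_cases m <;> omega
        have : (Multiplicative.toAdd ((g : Multiplicative (ZMod nc) × Fˣ).1))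
            = (Multiplicative.toAdd ((g' : Multiplicative (ZMod nc) × Fˣ).1)) :=
          ZMod.val_injective nc htt
        have hfst : (g : Multiplicative (ZMod nc) × Fˣ).1
            = (g' : Multiplicative (ZMod nc) × Fˣ).1 :=
          Multiplicative.toAdd.injective this
        exact Subtype.ext (Prod.ext hfst hsnd)
      have he1 : e = Nat.card ψ.range :=
        Nat.card_congr (MonoidHom.ofInjective hinj).toEquiv
      rw [he1, ← hcardU]
      exact Subgroup.card_subgroup_dvd_card ψ.range
    have hedc : e ∣ dc := hdc ▸ Nat.dvd_gcd hedq hednc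
    -- the scalar action and R_c
    letI actU : MulAction Fˣ ↥C :=
      { smul := fun α v => ⟨(α : F) • v.1, hCs _ v.2 α⟩
        one_smul := by
          intro v
          apply Subtype.ext
          show ((1 : Fˣ) : F) • v.1 = v.1
          simp
        mul_smul := by
          intro α β v
          apply Subtype.ext
          show ((α * β : Fˣ) : F) • v.1 = (α : F) • ((β : F) • v.1)
          rw [Units.val_mul, mul_smul] }
    have hUdef : ∀ (α : Fˣ) (v : ↥C), (α • v).1 = (α : F) • v.1 := fun _ _ => rfl
    have hfreeU : ∀ (α : Fˣ) (v : ↥C), α • v = v → α = 1 := by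
      intro α v h
      have h1 := congrArg Subtype.val h
      rw [hUdef] at h1
      have hv0 : v.1 ≠ 0 := hmp_ne_zero v.2 hcu
      have hsub : ((α : F) - 1) • v.1 = 0 := by rw [sub_smul, h1, one_smul, sub_self]
      have := sub_eq_zero.mp ((smul_eq_zero.mp hsub).resolve_right hv0)
      exact Units.ext (by rw [Units.val_one]; exact this)
    have hcardCU : Nat.card ↥C
        = Nat.card (MulAction.orbitRel.Quotient Fˣ ↥C) * (q - 1) := by
      rw [card_of_free Fˣ ↥C hfreeU, hcardU]
    have hRcQ : Nat.card (MulAction.orbitRel.Quotient Fˣ ↥C) = Rc := by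
      have hfc : ∀ v : ↥C, propClass v.1 ∈ classesOf C := fun v => ⟨v.1, v.2, rfl⟩
      have hresp : ∀ u v : ↥C, MulAction.orbitRel Fˣ ↥C u v →
          (⟨propClass u.1, hfc u⟩ : ↥(classesOf C)) = ⟨propClass v.1, hfc v⟩ := by
        intro u v huv
        obtain ⟨g, hg⟩ := MulAction.orbitRel_apply.mp huv
        apply Subtype.ext
        show propClass u.1 = propClass v.1
        have h1 : u.1 = (g : F) • v.1 := by rw [← hg, hUdef]
        rw [h1, propClass_smul g.ne_zero]
      let Fq : MulAction.orbitRel.Quotient Fˣ ↥C → ↥(classesOf C) :=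
        Quotient.lift (fun v : ↥C => (⟨propClass v.1, hfc v⟩ : ↥(classesOf C))) hresp
      have hbij : Function.Bijective Fq := by
        constructor
        · intro a b
          refine Quotient.inductionOn₂ a b ?_
          intro u v hab
          have h1 : propClass u.1 = propClass v.1 := congrArg Subtype.val hab
          have hu : u.1 ∈ propClass v.1 := by
            rw [← h1]
            exact ⟨1, one_ne_zero, (one_smul F u.1).symm⟩
          obtain ⟨α, hα, hu1⟩ := hu
          refine Quotient.sound (MulAction.orbitRel_apply.mpr
            (MulAction.mem_orbit_iff.mpr ⟨Units.mk0 α hα, Subtype.ext ?_⟩))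
          rw [hUdef]
          exact hu1.symm
        · rintro ⟨P, v, hv, rfl⟩
          exact ⟨Quotient.mk _ (⟨v, hv⟩ : ↥C), Subtype.ext rfl⟩
      rw [Nat.card_congr (Equiv.ofBijective Fq hbij), Nat.card_coe_set_eq, ← hRc]
    -- the cyclic action and divisibility by nc
    letI actZ : MulAction (Multiplicative (ZMod nc)) ↥C :=
      { smul := fun j v => ⟨xbar F n ^ ((Multiplicative.toAdd j).val) * v.1, hCx _ v.2 _⟩
        one_smul := by
          intro v
          apply Subtype.ext
          show xbar F n ^ ((Multiplicative.toAdd (1 : Multiplicative (ZMod nc))).val)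
            * v.1 = v.1
          simp
        mul_smul := by
          intro a b v
          apply Subtype.ext
          show xbar F n ^ ((Multiplicative.toAdd (a * b)).val) * v.1
            = xbar F n ^ ((Multiplicative.toAdd a).val)
              * (xbar F n ^ ((Multiplicative.toAdd b).val) * v.1)
          rw [toAdd_mul, ZMod.val_add, hmodp _ _ v.2, pow_add, mul_assoc] }
    have hZdef : ∀ (j : Multiplicative (ZMod nc)) (v : ↥C),
        (j • v).1 = xbar F n ^ ((Multiplicative.toAdd j).val) * v.1 := fun _ _ => rfl
    have hfreeZ : ∀ (j : Multiplicative (ZMod nc)) (v : ↥C), j • v = v → j = 1 := by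
      intro j v h
      have h1 := congrArg Subtype.val h
      rw [hZdef] at h1
      have hdvd := polyOrder_dvd hn hcd ((hmp_pow_iff v.2 _).mp h1)
      rw [← hnc] at hdvd
      have hlt := ZMod.val_lt (Multiplicative.toAdd j)
      have hval : (Multiplicative.toAdd j).val = 0 := by
        rcases Nat.eq_zero_or_pos ((Multiplicative.toAdd j).val) with h0 | hpos
        · exact h0
        · exact absurd (Nat.le_of_dvd hpos hdvd) (not_le.mpr hlt)
      have hto : Multiplicative.toAdd j
          = Multiplicative.toAdd (1 : Multiplicative (ZMod nc)) := by
        apply ZMod.val_injective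
        rw [hval]
        simp
      exact Multiplicative.toAdd.injective hto
    have hncdvdC : nc ∣ Nat.card ↥C := by
      rw [card_of_free (Multiplicative (ZMod nc)) ↥C hfreeZ, hcardMZ]
      exact dvd_mul_left nc _
    have hcardC : Nat.card ↥C = Rc * (q - 1) := by rw [hcardCU, hRcQ]
    -- the two orbits are disjoint
    have hdisj : Disjoint (MulAction.orbit (Multiplicative (ZMod nc) × Fˣ) (⟨z, hz⟩ : ↥C))
        (MulAction.orbit (Multiplicative (ZMod nc) × Fˣ) (⟨w, hw⟩ : ↥C)) := by
      rw [Set.disjoint_left]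
      intro a haz haw
      apply horb
      have h1 := MulAction.orbit_eq_iff.mpr haz
      have h2 := MulAction.orbit_eq_iff.mpr haw
      rw [show MulAction.orbit (Multiplicative (ZMod nc) × Fˣ) (⟨z, hz⟩ : ↥C)
          = MulAction.orbit (Multiplicative (ZMod nc) × Fˣ) (⟨w, hw⟩ : ↥C)
        from h1.symm.trans h2]
      exact MulAction.mem_orbit_self _
    have hsum : Nat.card (MulAction.orbit (Multiplicative (ZMod nc) × Fˣ)
          (⟨z, hz⟩ : ↥C))
        + Nat.card (MulAction.orbit (Multiplicative (ZMod nc) × Fˣ) (⟨w, hw⟩ : ↥C))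
        ≤ Rc * (q - 1) := by
      have hun := Set.ncard_union_eq hdisj (Set.toFinite _) (Set.toFinite _)
      have hle : (MulAction.orbit (Multiplicative (ZMod nc) × Fˣ) (⟨z, hz⟩ : ↥C)
          ∪ MulAction.orbit (Multiplicative (ZMod nc) × Fˣ) (⟨w, hw⟩ : ↥C)).ncard
          ≤ Nat.card ↥C := by
        rw [← Set.ncard_univ]
        exact Set.ncard_le_ncard (Set.subset_univ _) Set.finite_univ
      rw [hun, hcardC] at hle
      simpa [Nat.card_coe_set_eq] using hle
    -- numerical contradiction
    have hkey : 2 * (nc * (q - 1)) ≤ Rc * (q - 1) * e := by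
      have h1 := Nat.mul_le_mul_right e hsum
      rw [add_mul, horbz, horbw] at h1
      rw [two_mul]
      exact h1
    have hCpos : 0 < Rc * (q - 1) := by
      rw [← hcardC]
      exact Nat.card_pos
    have hdcq : dc ∣ q - 1 := hdc ▸ Nat.gcd_dvd_left _ _
    have hdcn : dc ∣ nc := hdc ▸ Nat.gcd_dvd_right _ _
    have hdcpos : 0 < dc := hdc ▸ Nat.gcd_pos_of_pos_left _ hq1
    have hele : e ≤ dc := Nat.le_of_dvd hdcpos hedc
    have hscnc : sc * nc = Rc * (q - 1) := by
      rw [hsc]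
      exact Nat.div_mul_cancel (hcardC ▸ hncdvdC)
    have hbcdc : bc * dc = q - 1 := by rw [hbc]; exact Nat.div_mul_cancel hdcq
    have hrcdc : rc * dc = nc := by rw [hrc]; exact Nat.div_mul_cancel hdcn
    have hbcpos : 0 < bc := by
      rcases Nat.eq_zero_or_pos bc with h | h
      · rw [h, zero_mul] at hbcdc; omega
      · exact h
    have finalRc : rc = Rc → False := by
      intro hrR
      have h1 : Rc * e ≤ nc := by
        calc Rc * e = rc * e := by rw [hrR]
          _ ≤ rc * dc := Nat.mul_le_mul_left _ hele
          _ = nc := hrcdc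
      have h2 : Rc * (q - 1) * e ≤ nc * (q - 1) := by
        calc Rc * (q - 1) * e = (Rc * e) * (q - 1) := by ring
          _ ≤ nc * (q - 1) := Nat.mul_le_mul_right _ h1
      have h3 := le_trans hkey h2
      have hpos : 0 < nc * (q - 1) := Nat.mul_pos hncpos0 hq1
      generalize hX : nc * (q - 1) = X at h3 hpos
      omega
    obtain hcond | hcond | hcond := hcond
    · apply finalRc
      have h1 : (bc * dc) * rc = (bc * dc) * Rc := by
        calc (bc * dc) * rc = bc * (rc * dc) := by ring
          _ = bc * nc := by rw [hrcdc]
          _ = sc * nc := by rw [hcond]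
          _ = Rc * (q - 1) := hscnc
          _ = Rc * (bc * dc) := by rw [hbcdc]
          _ = (bc * dc) * Rc := by ring
      exact Nat.eq_of_mul_eq_mul_left (Nat.mul_pos hbcpos hdcpos) h1
    · exact finalRc hcond
    · have hscpos : 0 < sc := by
        rcases Nat.eq_zero_or_pos sc with h | h
        · rw [h, zero_mul] at hscnc; omega
        · exact h
      have hsr : sc * rc = Rc * bc := by
        have h1 : (sc * rc) * dc = (Rc * bc) * dc := by
          calc (sc * rc) * dc = sc * (rc * dc) := by ring
            _ = sc * nc := by rw [hrcdc]
            _ = Rc * (q - 1) := hscnc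
            _ = Rc * (bc * dc) := by rw [hbcdc]
            _ = (Rc * bc) * dc := by ring
        exact Nat.eq_of_mul_eq_mul_right hdcpos h1
      have hscdvd : sc ∣ bc :=
        Nat.Coprime.dvd_of_dvd_mul_left hcond ⟨rc, hsr.symm⟩
      have hscle : sc ≤ bc := Nat.le_of_dvd hbcpos hscdvd
      have h1 : sc * (2 * (nc * (q - 1))) ≤ sc * (Rc * (q - 1) * e) :=
        Nat.mul_le_mul_left _ hkey
      have h2 : sc * (2 * (nc * (q - 1))) = 2 * (Rc * (q - 1)) * (q - 1) := by
        calc sc * (2 * (nc * (q - 1))) = 2 * (sc * nc) * (q - 1) := by ring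
          _ = 2 * (Rc * (q - 1)) * (q - 1) := by rw [hscnc]
      have h4 : sc * e ≤ q - 1 := by
        calc sc * e ≤ bc * dc := Nat.mul_le_mul hscle hele
          _ = q - 1 := hbcdc
      have h6 : 2 * ((Rc * (q - 1)) * (q - 1)) ≤ (Rc * (q - 1)) * (q - 1) := by
        calc 2 * ((Rc * (q - 1)) * (q - 1)) = 2 * (Rc * (q - 1)) * (q - 1) := by ring
          _ = sc * (2 * (nc * (q - 1))) := h2.symm
          _ ≤ sc * (Rc * (q - 1) * e) := h1
          _ = (Rc * (q - 1)) * (sc * e) := by ring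
          _ ≤ (Rc * (q - 1)) * (q - 1) := Nat.mul_le_mul_left _ h4
      have hpos2 : 0 < (Rc * (q - 1)) * (q - 1) := Nat.mul_pos hCpos hq1
      generalize hX : (Rc * (q - 1)) * (q - 1) = X at h6 hpos2
      omega

end CyclicCode
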